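/- In the five-element poset P = {p, q, r, s, t} with order generated by q ≤ s, r ≤ s, t ≤ p, t ≤ s (where s plays the role of q∨r and t of p∧(q∨r)): the pairwise meets p∧q and p∧r do not exist in P, yet P is representable via the assignment p ↦ {a,c,d}, q ↦ {b,d}, r ↦ {b,c} (with s ↦ {b,c,d}, t ↦ {c,d}) into subsets of {a,b,c,d}; this map is an order embedding preserving all existing finite meets as intersections and all existing finite joins as unions. -/

import Mathlib

/-- The five-element poset `{p, q, r, s, t}` with order generated by
`q ≤ s`, `r ≤ s`, `t ≤ p`, `t ≤ s` (so `s = q ∨ r` and `t = p ∧ (q ∨ r)`). -/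
inductive P9 : Type
  | p | q | r | s | t
deriving DecidableEq

instance : Fintype P9 where
  elems := {.p, .q, .r, .s, .t}
  complete := by intro x; cases x <;> simp

namespace P9

def ble : P9 → P9 → Bool
  | .q, .s => true
  | .r, .s => true
  | .t, .p => true
  | .t, .s => true
  | a, b => a = b

instance : PartialOrder P9 where
  le a b := ble a b = true
  le_refl := by
    show ∀ a : P9, ble a a = true
    decide
  le_trans := by
    show ∀ a b c : P9, ble a b = true → ble b c = true → ble a c = true
    decide
  le_antisymm := by
    show ∀ a b : P9, ble a b = true → ble b a = true → a = b
    decide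

/-- The representing map into subsets of `Fin 4` (`a = 0`, `b = 1`, `c = 2`, `d = 3`):
`p ↦ {a,c,d}`, `q ↦ {b,d}`, `r ↦ {b,c}`, `s ↦ {b,c,d}`, `t ↦ {c,d}`. -/
def f : P9 → Set (Fin 4)
  | .p => {0, 2, 3}
  | .q => {1, 3}
  | .r => {1, 2}
  | .s => {1, 2, 3}
  | .t => {2, 3}

end P9

namespace P9

instance : DecidableRel (α := P9) (· ≤ ·) := fun a b => inferInstanceAs (Decidable (ble a b = true))

lemma le_iff' : ∀ a b : P9, a ≤ b ↔ f a ⊆ f b := by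
  intro a b
  cases a <;> cases b <;> simp [f, Set.subset_def] <;> decide

lemma meet_repr (S : Set P9) (m : P9) (hne : S.Nonempty) (h : IsGLB S m) :
    f m = ⋂ x ∈ S, f x := by
  apply subset_antisymm
  · exact Set.subset_iInter₂ fun x hx => (le_iff' m x).1 (h.1 hx)
  by_cases hm : m ∈ S
  · exact Set.iInter₂_subset m hm
  have hstrict : ∀ x ∈ S, m ≤ x ∧ m ≠ x :=
    fun x hx => ⟨h.1 hx, fun e => hm (e ▸ hx)⟩
  cases m with
  | p =>
    obtain ⟨x, hx⟩ := hne
    exact absurd (hstrict x hx) ((by decide : ∀ y : P9, ¬(P9.p ≤ y ∧ P9.p ≠ y)) x)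
  | s =>
    obtain ⟨x, hx⟩ := hne
    exact absurd (hstrict x hx) ((by decide : ∀ y : P9, ¬(P9.s ≤ y ∧ P9.s ≠ y)) x)
  | q =>
    have hs : ∀ x ∈ S, P9.s ≤ x := by
      intro x hx
      have h2 := hstrict x hx
      have hxs : x = P9.s := by revert h2; cases x <;> decide
      exact hxs ▸ le_refl _
    exact absurd (h.2 hs) (by decide)
  | r =>
    have hs : ∀ x ∈ S, P9.s ≤ x := by
      intro x hx
      have h2 := hstrict x hx
      have hxs : x = P9.s := by revert h2; cases x <;> decide
      exact hxs ▸ le_refl _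
    exact absurd (h.2 hs) (by decide)
  | t =>
    have hps : ∀ x ∈ S, x = P9.p ∨ x = P9.s := by
      intro x hx
      have h2 := hstrict x hx
      revert h2; cases x <;> decide
    have hp : P9.p ∈ S := by
      by_contra hp
      have hs : ∀ x ∈ S, P9.s ≤ x := by
        intro x hx
        rcases hps x hx with rfl | rfl
        · exact absurd hx hp
        · exact le_refl _
      exact absurd (h.2 hs) (by decide)
    have hsS : P9.s ∈ S := by
      by_contra hs
      have hp' : ∀ x ∈ S, P9.p ≤ x := by
        intro x hx
        rcases hps x hx with rfl | rfl
        · exact le_refl _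
        · exact absurd hx hs
      exact absurd (h.2 hp') (by decide)
    intro v hv
    have hvp := Set.mem_iInter₂.1 hv _ hp
    have hvs := Set.mem_iInter₂.1 hv _ hsS
    simp [f] at hvp hvs ⊢
    omega

lemma join_repr (S : Set P9) (j : P9) (hne : S.Nonempty) (h : IsLUB S j) :
    f j = ⋃ x ∈ S, f x := by
  refine subset_antisymm ?_ (Set.iUnion₂_subset fun x hx => (le_iff' x j).1 (h.1 hx))
  by_cases hj : j ∈ S
  · exact Set.subset_biUnion_of_mem hj
  have hstrict : ∀ x ∈ S, x ≤ j ∧ x ≠ j :=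
    fun x hx => ⟨h.1 hx, fun e => hj (e ▸ hx)⟩
  cases j with
  | q =>
    obtain ⟨x, hx⟩ := hne
    exact absurd (hstrict x hx) ((by decide : ∀ y : P9, ¬(y ≤ P9.q ∧ y ≠ P9.q)) x)
  | r =>
    obtain ⟨x, hx⟩ := hne
    exact absurd (hstrict x hx) ((by decide : ∀ y : P9, ¬(y ≤ P9.r ∧ y ≠ P9.r)) x)
  | t =>
    obtain ⟨x, hx⟩ := hne
    exact absurd (hstrict x hx) ((by decide : ∀ y : P9, ¬(y ≤ P9.t ∧ y ≠ P9.t)) x)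
  | p =>
    have ht : ∀ x ∈ S, x ≤ P9.t := by
      intro x hx
      have h2 := hstrict x hx
      have hxt : x = P9.t := by revert h2; cases x <;> decide
      exact hxt ▸ le_refl _
    exact absurd (h.2 ht) (by decide)
  | s =>
    have hqrt : ∀ x ∈ S, x = P9.q ∨ x = P9.r ∨ x = P9.t := by
      intro x hx
      have h2 := hstrict x hx
      revert h2; cases x <;> decide
    -- helper: if S has a single element c then contradiction
    have single : ∀ c : P9, ¬ P9.s ≤ c → (∀ x ∈ S, x = c) → False := by
      intro c hc hall
      exact hc (h.2 fun x hx => (hall x hx) ▸ le_refl c)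
    have cover2 : ∀ a b : P9, a ∈ S → b ∈ S → f P9.s ⊆ f a ∪ f b →
        f P9.s ⊆ ⋃ x ∈ S, f x := by
      intro a b ha hb hcov v hv
      rcases hcov hv with hva | hvb
      · exact Set.mem_biUnion ha hva
      · exact Set.mem_biUnion hb hvb
    have covqr : f P9.s ⊆ f P9.q ∪ f P9.r := by intro v hv; simp [f] at hv ⊢; tauto
    have covqt : f P9.s ⊆ f P9.q ∪ f P9.t := by intro v hv; simp [f] at hv ⊢; tauto
    have covrt : f P9.s ⊆ f P9.r ∪ f P9.t := by intro v hv; simp [f] at hv ⊢; tauto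
    by_cases hq : P9.q ∈ S
    · by_cases hr : P9.r ∈ S
      · exact cover2 _ _ hq hr covqr
      · by_cases ht : P9.t ∈ S
        · exact cover2 _ _ hq ht covqt
        · exact absurd (single P9.q (by decide) fun x hx => by
            rcases hqrt x hx with rfl | rfl | rfl
            · rfl
            · exact absurd hx hr
            · exact absurd hx ht) not_false
    · by_cases hr : P9.r ∈ S
      · by_cases ht : P9.t ∈ S
        · exact cover2 _ _ hr ht covrt
        · exact absurd (single P9.r (by decide) fun x hx => by
            rcases hqrt x hx with rfl | rfl | rfl
            · exact absurd hx hq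
            · rfl
            · exact absurd hx ht) not_false
      · by_cases ht : P9.t ∈ S
        · exact absurd (single P9.t (by decide) fun x hx => by
            rcases hqrt x hx with rfl | rfl | rfl
            · exact absurd hx hq
            · exact absurd hx hr
            · rfl) not_false
        · obtain ⟨x, hx⟩ := hne
          rcases hqrt x hx with rfl | rfl | rfl
          · exact absurd hx hq
          · exact absurd hx hr
          · exact absurd hx ht

end P9

/-- In `P9`, the meets `p ∧ q` and `p ∧ r` do not exist, yet the map `f`
is a representation of `P9`: an order embedding into `℘(Fin 4)` sending all existing
(finite) meets to intersections and all existing (finite) joins to unions.  (Hence the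
condition LMD is not necessary for representability.) -/
theorem P9_representable_but_meets_fail :
    (¬ ∃ m : P9, IsGLB {P9.p, P9.q} m) ∧
    (¬ ∃ m : P9, IsGLB {P9.p, P9.r} m) ∧
    (∀ a b : P9, a ≤ b ↔ P9.f a ⊆ P9.f b) ∧
    (∀ (S : Set P9) (m : P9), S.Nonempty → IsGLB S m → P9.f m = ⋂ x ∈ S, P9.f x) ∧
    (∀ (S : Set P9) (j : P9), S.Nonempty → IsLUB S j → P9.f j = ⋃ x ∈ S, P9.f x) := by
  refine ⟨?_, ?_, P9.le_iff', fun S m => P9.meet_repr S m, fun S j => P9.join_repr S j⟩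
  · rintro ⟨m, hm⟩
    have h1 : m ≤ P9.p := hm.1 (Set.mem_insert _ _)
    have h2 : m ≤ P9.q := hm.1 (Set.mem_insert_of_mem _ rfl)
    exact (by decide : ∀ y : P9, ¬(y ≤ P9.p ∧ y ≤ P9.q)) m ⟨h1, h2⟩
  · rintro ⟨m, hm⟩
    have h1 : m ≤ P9.p := hm.1 (Set.mem_insert _ _)
    have h2 : m ≤ P9.r := hm.1 (Set.mem_insert_of_mem _ rfl)
    exact (by decide : ∀ y : P9, ¬(y ≤ P9.p ∧ y ≤ P9.r)) m ⟨h1, h2⟩
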